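/- arXiv:2007.01093 — 2 statements merged into one kernel-verified Lean document; each statement's English description precedes it below -/
import Mathlib

section
/- Let α > 0 and p > 1/α, and consider the kernel k(r) = r^{−1/α} (log(1/r))^{−p} for r ∈ (0,1). Then for every u ∈ (0,1): (a) ∫_0^u |k(r)|^α dr = (pα − 1)^{−1} (log(1/u))^{1 − pα} < ∞, so k ∈ L^α([0,u]); and (b) for every ζ > 0, lim_{u → 0^+} u^{−ζ} ∫_0^u |k(r)|^α dr = +∞, i.e. the kernel satisfies the local non-determinism condition with every exponent ζ > 0. -/
open Real MeasureTheory Filter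

private lemma aux_deriv (q : ℝ) (hq : 1 < q) {r : ℝ} (hr : r ∈ Set.Ioo (0:ℝ) 1) :
    HasDerivAt (fun r => (q-1)⁻¹ * (Real.log (1/r)) ^ (1-q))
      (r⁻¹ * (Real.log (1/r)) ^ (-q)) r := by
  have hr0 : (0:ℝ) < r := hr.1
  have hlog : 0 < Real.log (1/r) := by
    rw [one_div, Real.log_inv]
    simpa using Real.log_neg hr0 hr.2
  have h1 : HasDerivAt (fun r : ℝ => Real.log (1/r)) (-r⁻¹) r := by
    have := (Real.hasDerivAt_log hr0.ne').neg
    refine this.congr_of_eventuallyEq ?_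
    filter_upwards [eventually_ne_nhds hr0.ne'] with x hx
    rw [one_div, Real.log_inv, Pi.neg_apply]
  have h2 := (h1.rpow_const (p := 1-q) (Or.inl hlog.ne')).const_mul ((q-1)⁻¹)
  refine h2.congr_deriv ?_
  have : (1:ℝ) - q - 1 = -q := by ring
  rw [this]
  have hq0 : q - 1 ≠ 0 := ne_of_gt (by linarith)
  field_simp
  ring

private lemma aux_cont (q : ℝ) {s : Set ℝ} (hs : s ⊆ Set.Ioo (0:ℝ) 1) :
    ContinuousOn (fun r : ℝ => r⁻¹ * (Real.log (1/r)) ^ (-q)) s := by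
  have hlog : ∀ x ∈ s, 0 < Real.log (1/x) := by
    intro x hx
    rw [one_div, Real.log_inv]
    simpa using Real.log_neg (hs hx).1 (hs hx).2
  have hc1 : ContinuousOn (fun r : ℝ => r⁻¹) s :=
    continuousOn_inv₀.mono fun x hx => ne_of_gt (hs hx).1
  have hc2 : ContinuousOn (fun r : ℝ => Real.log (1/r)) s := by
    refine ContinuousOn.log ?_ fun x hx => one_div_ne_zero (ne_of_gt (hs hx).1)
    exact continuousOn_const.div continuousOn_id fun x hx => ne_of_gt (hs hx).1
  exact hc1.mul (hc2.rpow_const fun x hx => Or.inl (hlog x hx).ne')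

private lemma aux_tendstoF (q : ℝ) (hq : 1 < q) :
    Tendsto (fun r : ℝ => (q-1)⁻¹ * (Real.log (1/r)) ^ (1-q)) (nhdsWithin 0 (Set.Ioi 0))
      (nhds 0) := by
  have hL : Tendsto (fun r : ℝ => Real.log (1/r)) (nhdsWithin 0 (Set.Ioi 0)) atTop := by
    have h := tendsto_neg_atBot_atTop.comp Real.tendsto_log_nhdsGT_zero
    refine h.congr fun x => ?_
    simp [one_div, Real.log_inv]
  have h2 : Tendsto (fun x : ℝ => x ^ (1-q)) atTop (nhds 0) := by
    have := tendsto_rpow_neg_atTop (y := q - 1) (by linarith)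
    refine this.congr fun x => ?_
    norm_num
  have := (h2.comp hL).const_mul ((q-1)⁻¹)
  simpa using this

private lemma aux_key (q : ℝ) (hq : 1 < q) {u : ℝ} (hu : u ∈ Set.Ioo (0:ℝ) 1) :
    IntegrableOn (fun r : ℝ => r⁻¹ * (Real.log (1/r)) ^ (-q)) (Set.Ioc 0 u) ∧
    ∫ r in Set.Ioc 0 u, r⁻¹ * (Real.log (1/r)) ^ (-q)
      = (q-1)⁻¹ * (Real.log (1/u)) ^ (1-q) := by
  set f : ℝ → ℝ := fun r => r⁻¹ * (Real.log (1/r)) ^ (-q) with hf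
  set F : ℝ → ℝ := fun r => (q-1)⁻¹ * (Real.log (1/r)) ^ (1-q) with hF
  obtain ⟨hu0, hu1⟩ := hu
  set a : ℕ → ℝ := fun n => u * ((n:ℝ) + 2)⁻¹ with ha
  have han0 : ∀ n, 0 < a n := fun n => by positivity
  have hanu : ∀ n, a n < u := by
    intro n
    have h2 : ((n:ℝ) + 2)⁻¹ < 1 := by
      rw [inv_lt_one_iff₀]; right; linarith [Nat.cast_nonneg (α := ℝ) n]
    calc a n < u * 1 := by
          exact mul_lt_mul_of_pos_left h2 hu0
      _ = u := mul_one u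
  have hsub : ∀ n, Set.Icc (a n) u ⊆ Set.Ioo (0:ℝ) 1 := by
    intro n x hx
    exact ⟨lt_of_lt_of_le (han0 n) hx.1, lt_of_le_of_lt hx.2 hu1⟩
  have ha0 : Tendsto a atTop (nhds 0) := by
    have h1 : Tendsto (fun n : ℕ => ((n:ℝ) + 2)⁻¹) atTop (nhds 0) := by
      refine Tendsto.inv_tendsto_atTop ?_
      exact tendsto_atTop_add_const_right atTop 2 tendsto_natCast_atTop_atTop
    simpa using h1.const_mul u
  have ha0' : Tendsto a atTop (nhdsWithin 0 (Set.Ioi 0)) := by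
    refine tendsto_nhdsWithin_iff.mpr ⟨ha0, Eventually.of_forall fun n => han0 n⟩
  -- F nonneg, f nonneg on (0,1)
  have hFnn : ∀ r ∈ Set.Ioo (0:ℝ) 1, 0 ≤ F r := by
    intro r hr
    have h1 : (0:ℝ) ≤ (q-1)⁻¹ := inv_nonneg.mpr (by linarith)
    have h2 : (0:ℝ) ≤ Real.log (1/r) := by
      rw [one_div, Real.log_inv]
      simpa using (Real.log_neg hr.1 hr.2).le
    exact mul_nonneg h1 (Real.rpow_nonneg h2 _)
  have hfnn : ∀ x ∈ Set.Ioc (0:ℝ) u, 0 ≤ f x := by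
    intro x hx
    exact mul_nonneg (inv_nonneg.mpr hx.1.le) (Real.rpow_nonneg (by
      rw [one_div, Real.log_inv]
      simpa using (Real.log_neg hx.1 (lt_of_le_of_lt hx.2 hu1)).le) _)
  -- interval integral computation
  have hstep : ∀ n, ∫ x in Set.Ioc (a n) u, f x = F u - F (a n) := by
    intro n
    have hderiv : ∀ x ∈ Set.uIcc (a n) u, HasDerivAt F (f x) x := by
      intro x hx
      rw [Set.uIcc_of_le (hanu n).le] at hx
      exact aux_deriv q hq (hsub n hx)
    have hcont : ContinuousOn f (Set.uIcc (a n) u) := by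
      rw [Set.uIcc_of_le (hanu n).le]
      exact aux_cont q (hsub n)
    have := intervalIntegral.integral_eq_sub_of_hasDerivAt hderiv
      (hcont.intervalIntegrable)
    rw [← this, intervalIntegral.integral_of_le (hanu n).le]
  have hfi : ∀ n, IntegrableOn f (Set.Ioc (a n) u) := by
    intro n
    exact ((aux_cont q (hsub n)).integrableOn_Icc).mono_set Set.Ioc_subset_Icc_self
  -- integrability on Ioc 0 u
  have hInt : IntegrableOn f (Set.Ioc 0 u) := by
    refine integrableOn_Ioc_of_intervalIntegral_norm_bounded_left (I := F u) hfi ha0 ?_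
    filter_upwards with n
    have hnorm : ∫ x in Set.Ioc (a n) u, ‖f x‖ = ∫ x in Set.Ioc (a n) u, f x := by
      refine setIntegral_congr_fun measurableSet_Ioc fun x hx => ?_
      exact Real.norm_of_nonneg (hfnn x ⟨lt_trans (han0 n) hx.1, hx.2⟩)
    rw [hnorm, hstep n]
    linarith [hFnn (a n) ⟨han0 n, lt_trans (hanu n) hu1⟩]
  refine ⟨hInt, ?_⟩
  -- integral value via AECover
  have hcov : AECover (volume.restrict (Set.Ioc 0 u)) atTop
      (fun n => Set.Ioc (a n) u) :=
    aecover_Ioc_of_Ioc ha0 tendsto_const_nhds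
  have ht1 := hcov.integral_tendsto_of_countably_generated (f := f) hInt
  have heq : ∀ n, ∫ x in Set.Ioc (a n) u, f x ∂(volume.restrict (Set.Ioc 0 u))
      = ∫ x in Set.Ioc (a n) u, f x := by
    intro n
    rw [Measure.restrict_restrict measurableSet_Ioc,
      Set.inter_eq_self_of_subset_left (Set.Ioc_subset_Ioc (han0 n).le le_rfl)]
  have ht2 : Tendsto (fun n => ∫ x in Set.Ioc (a n) u, f x) atTop
      (nhds (∫ x in Set.Ioc 0 u, f x)) := by
    refine ht1.congr fun n => (heq n)
  have ht3 : Tendsto (fun n => ∫ x in Set.Ioc (a n) u, f x) atTop (nhds (F u)) := by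
    have := (aux_tendstoF q hq).comp ha0'
    have h4 : Tendsto (fun n => F u - F (a n)) atTop (nhds (F u - 0)) :=
      tendsto_const_nhds.sub this
    rw [sub_zero] at h4
    exact h4.congr fun n => (hstep n).symm
  exact tendsto_nhds_unique ht2 ht3

/-- For `α > 0`, `p > 1/α` and the kernel `k(r) = r^{−1/α}(log(1/r))^{−p}` on `(0,1)`:
(a) for every `u ∈ (0,1)`, `k ∈ L^α([0,u])` with
`∫_0^u |k(r)|^α dr = (pα−1)^{−1}(log(1/u))^{1−pα}`; and
(b) for every `ζ > 0`, `u^{−ζ} ∫_0^u |k(r)|^α dr → +∞` as `u → 0⁺`, i.e. the kernel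
satisfies the local non-determinism condition with every exponent `ζ > 0`. -/
theorem stmt_7 (α p : ℝ) (hα : 0 < α) (hp : 1 / α < p) :
    (∀ u : ℝ, u ∈ Set.Ioo (0 : ℝ) 1 →
        IntegrableOn (fun r => |r ^ (-(1 / α)) * (Real.log (1 / r)) ^ (-p)| ^ α)
          (Set.Ioo 0 u) ∧
        ∫ r in Set.Ioo 0 u, |r ^ (-(1 / α)) * (Real.log (1 / r)) ^ (-p)| ^ α
          = (p * α - 1)⁻¹ * (Real.log (1 / u)) ^ (1 - p * α)) ∧
    (∀ ζ : ℝ, 0 < ζ →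
        Tendsto
          (fun u : ℝ =>
            u ^ (-ζ) * ∫ r in Set.Ioo 0 u, |r ^ (-(1 / α)) * (Real.log (1 / r)) ^ (-p)| ^ α)
          (nhdsWithin 0 (Set.Ioi 0)) atTop) := by
  have hq : 1 < p * α := (div_lt_iff₀ hα).mp hp
  have habs : ∀ r ∈ Set.Ioo (0:ℝ) 1,
      |r ^ (-(1 / α)) * (Real.log (1 / r)) ^ (-p)| ^ α
        = r⁻¹ * (Real.log (1/r)) ^ (-(p * α)) := by
    intro r hr
    have hr0 : (0:ℝ) < r := hr.1
    have hL : 0 < Real.log (1/r) := by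
      rw [one_div, Real.log_inv]
      simpa using Real.log_neg hr.1 hr.2
    have h1 : 0 < r ^ (-(1/α)) := Real.rpow_pos_of_pos hr0 _
    have h2 : 0 < (Real.log (1/r)) ^ (-p) := Real.rpow_pos_of_pos hL _
    rw [abs_of_pos (mul_pos h1 h2), Real.mul_rpow h1.le h2.le,
      ← Real.rpow_mul hr0.le, ← Real.rpow_mul hL.le,
      show -(1/α) * α = -1 by field_simp, Real.rpow_neg_one, neg_mul]
  have hA : ∀ u : ℝ, u ∈ Set.Ioo (0 : ℝ) 1 →
      IntegrableOn (fun r => |r ^ (-(1 / α)) * (Real.log (1 / r)) ^ (-p)| ^ α)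
        (Set.Ioo 0 u) ∧
      ∫ r in Set.Ioo 0 u, |r ^ (-(1 / α)) * (Real.log (1 / r)) ^ (-p)| ^ α
        = (p * α - 1)⁻¹ * (Real.log (1 / u)) ^ (1 - p * α) := by
    intro u hu
    have key := aux_key (p * α) hq hu
    have hsub : Set.Ioo (0:ℝ) u ⊆ Set.Ioo (0:ℝ) 1 :=
      Set.Ioo_subset_Ioo le_rfl hu.2.le
    constructor
    · exact (key.1.mono_set Set.Ioo_subset_Ioc_self).congr_fun
        (fun x hx => (habs x (hsub hx)).symm) measurableSet_Ioo
    · rw [setIntegral_congr_fun measurableSet_Ioo (fun x hx => habs x (hsub hx)),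
        ← integral_Ioc_eq_integral_Ioo]
      exact key.2
  refine ⟨hA, ?_⟩
  intro ζ hζ
  have hL : Tendsto (fun u : ℝ => Real.log (1/u)) (nhdsWithin 0 (Set.Ioi 0)) atTop := by
    have h := tendsto_neg_atBot_atTop.comp Real.tendsto_log_nhdsGT_zero
    refine h.congr fun x => ?_
    simp [one_div, Real.log_inv]
  have hcomp := (tendsto_exp_mul_div_rpow_atTop (p * α - 1) ζ hζ).comp hL
  have hmain := hcomp.const_mul_atTop (r := (p * α - 1)⁻¹) (inv_pos.mpr (by linarith))
  refine hmain.congr' ?_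
  filter_upwards [Ioo_mem_nhdsGT (zero_lt_one)] with u hu
  rw [(hA u hu).2]
  simp only [Function.comp_apply]
  have hL0 : 0 < Real.log (1/u) := by
    rw [one_div, Real.log_inv]
    simpa using Real.log_neg hu.1 hu.2
  have hlog : Real.log (1/u) = -Real.log u := by rw [one_div, Real.log_inv]
  rw [Real.rpow_def_of_pos hu.1,
    show (1:ℝ) - p * α = -(p * α - 1) by ring, Real.rpow_neg hL0.le,
    show Real.log u * -ζ = ζ * Real.log (1/u) by rw [hlog]; ring,
    div_eq_mul_inv]
  ring
end

section
/- Let T > 0, γ, η ∈ (0,1) with γ + η > 1, and C, M ≥ 0. Let Γ : [0,T] × ℝ^d → ℝ^d satisfy, writing Γ_{s,t}(x) := Γ(t,x) − Γ(s,x): (i) |Γ_{s,t}(x)| ≤ C (t−s)^γ and (ii) |Γ_{s,t}(x) − Γ_{s,t}(y)| ≤ C |x−y| (t−s)^γ for all 0 ≤ s ≤ t ≤ T and x, y ∈ ℝ^d. Let y : [0,T] → ℝ^d be η-Hölder with |y_t − y_s| ≤ M (t−s)^η. Then there exists a constant K, depending only on γ + η, and a unique function I : [0,T] → ℝ^d with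 I_0 = 0 such that for all 0 ≤ s ≤ t ≤ T, |I_t − I_s − Γ_{s,t}(y_s)| ≤ K C M (t−s)^{γ+η}; moreover I is γ-Hölder continuous. (I_t is the nonlinear Young integral ∫_0^t Γ_{dr}(y_r), the limit of the Riemann sums ∑_{[u,v]∈𝒫} Γ_{u,v}(y_u) as the mesh of the partition 𝒫 of [0,t] tends to 0.) -/
open Set Filter Finset Topology

noncomputable section SewingAux

variable {E : Type*} [NormedAddCommGroup E] [NormedSpace ℝ E] [CompleteSpace E]

namespace Sew

/-- `j`-th point of the uniform `n`-partition of `[a,b]`. -/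
def pt (a b : ℝ) (n : ℕ) (j : ℕ) : ℝ := a + j * (b - a) / n

/-- Riemann sum of `A` over the uniform `n`-partition of `[a,b]`. -/
def RS (A : ℝ → ℝ → E) (n : ℕ) (a b : ℝ) : E :=
  ∑ j ∈ Finset.range n, A (pt a b n j) (pt a b n (j + 1))

/-- The sewing limit, along partitions into `k!` pieces. -/
def Iint (A : ℝ → ℝ → E) (a b : ℝ) : E :=
  limUnder atTop fun k => RS A (Nat.factorial k) a b

lemma pt_zero (a b : ℝ) (n : ℕ) : pt a b n 0 = a := by simp [pt]

lemma pt_last (a b : ℝ) {n : ℕ} (hn : n ≠ 0) : pt a b n n = b := by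
  have : (n : ℝ) ≠ 0 := Nat.cast_ne_zero.mpr hn
  rw [pt, mul_div_cancel_left₀ _ this]; ring

lemma pt_mono {a b : ℝ} (hab : a ≤ b) (n : ℕ) {i j : ℕ} (hij : i ≤ j) :
    pt a b n i ≤ pt a b n j := by
  unfold pt
  have h1 : (i : ℝ) ≤ (j : ℝ) := by exact_mod_cast hij
  have h2 : (0:ℝ) ≤ b - a := by linarith
  have h3 : (0:ℝ) ≤ (n:ℝ) := by positivity
  gcongr

lemma le_pt {a b : ℝ} (hab : a ≤ b) (n j : ℕ) : a ≤ pt a b n j := by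
  unfold pt
  have h2 : (0:ℝ) ≤ b - a := by linarith
  have h3 : (0:ℝ) ≤ (j:ℝ) * (b - a) / n := by positivity
  linarith

lemma pt_le {a b : ℝ} (hab : a ≤ b) {n j : ℕ} (hj : j ≤ n) (hn : n ≠ 0) :
    pt a b n j ≤ b := by
  calc pt a b n j ≤ pt a b n n := pt_mono hab n hj
  _ = b := pt_last a b hn

lemma pt_succ_sub (a b : ℝ) {n : ℕ} (hn : n ≠ 0) (j : ℕ) :
    pt a b n (j+1) - pt a b n j = (b - a) / n := by
  have : (n : ℝ) ≠ 0 := Nat.cast_ne_zero.mpr hn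
  unfold pt
  push_cast
  field_simp
  ring

lemma pt_block (a b : ℝ) {n m : ℕ} (hn : n ≠ 0) (hm : m ≠ 0) (i j : ℕ) :
    pt a b (n*m) (i*m + j) = pt (pt a b n i) (pt a b n (i+1)) m j := by
  have h1 : (n : ℝ) ≠ 0 := Nat.cast_ne_zero.mpr hn
  have h2 : (m : ℝ) ≠ 0 := Nat.cast_ne_zero.mpr hm
  unfold pt
  push_cast
  field_simp
  ring

lemma pt_compat₁ {a b : ℝ} {p q : ℕ} (hp : p ≠ 0) (hq : q ≠ 0) (i : ℕ) :
    pt a (pt a b q p) p i = pt a b q i := by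
  have h1 : (p : ℝ) ≠ 0 := Nat.cast_ne_zero.mpr hp
  have h2 : (q : ℝ) ≠ 0 := Nat.cast_ne_zero.mpr hq
  unfold pt
  field_simp
  ring

lemma pt_compat₂ {a b : ℝ} {p q : ℕ} (hpq : p < q) (i : ℕ) :
    pt (pt a b q p) b (q - p) i = pt a b q (p + i) := by
  have h2 : (q : ℝ) ≠ 0 := Nat.cast_ne_zero.mpr (by omega)
  have h3 : ((q - p : ℕ) : ℝ) = (q : ℝ) - p := by
    push_cast [Nat.cast_sub hpq.le]; ring
  have h4 : (q : ℝ) - p ≠ 0 := by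
    have : (p:ℝ) < q := by exact_mod_cast hpq
    linarith
  unfold pt
  rw [h3]
  push_cast
  field_simp
  ring

lemma sum_range_mul' {β : Type*} [AddCommMonoid β] (f : ℕ → β) (n m : ℕ) :
    ∑ j ∈ Finset.range (n*m), f j = ∑ i ∈ Finset.range n, ∑ j ∈ Finset.range m, f (i*m + j) := by
  induction n with
  | zero => simp
  | succ n ih =>
    rw [Nat.succ_mul, Finset.sum_range_add, ih, Finset.sum_range_succ]

/-- Block decomposition of a Riemann sum. -/
lemma RS_blocks (A : ℝ → ℝ → E) {n m : ℕ} (hn : n ≠ 0) (hm : m ≠ 0) (a b : ℝ) :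
    RS A (n*m) a b = ∑ i ∈ Finset.range n, RS A m (pt a b n i) (pt a b n (i+1)) := by
  unfold RS
  rw [sum_range_mul']
  refine Finset.sum_congr rfl fun i _ => Finset.sum_congr rfl fun j _ => ?_
  rw [← pt_block a b hn hm i j, ← pt_block a b hn hm i (j+1)]
  ring_nf

/-- The Chen-type defect hypothesis. -/
def Hdelta (T θ c : ℝ) (A : ℝ → ℝ → E) : Prop :=
  ∀ s u t : ℝ, 0 ≤ s → s ≤ u → u ≤ t → t ≤ T → ‖A s t - A s u - A u t‖ ≤ c * (t - s) ^ θ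

variable {T θ c : ℝ} {A : ℝ → ℝ → E}

/-- Crude estimate: splitting one interval into `m'+1` equal pieces. -/
lemma crude (hδ : Hdelta T θ c A) (hc : 0 ≤ c) (hθ : 0 ≤ θ)
    {a b : ℝ} (ha : 0 ≤ a) (hab : a ≤ b) (hb : b ≤ T) (m' : ℕ) :
    ‖RS A (m'+1) a b - A a b‖ ≤ m' * (c * (b - a) ^ θ) := by
  set m := m' + 1 with hm
  have hmne : m ≠ 0 := by omega
  set x : ℕ → ℝ := pt a b m with hx
  have key : ∀ j : ℕ, j < m →
      ‖(∑ i ∈ Finset.range j, A (x i) (x (i+1))) + A (x j) b - A a b‖ ≤ j * (c * (b - a) ^ θ) := by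
    intro j
    induction j with
    | zero =>
      intro _
      simp [hx, pt_zero]
    | succ j ih =>
      intro hj
      have hj' : j < m := by omega
      have hxj0 : 0 ≤ x j := le_trans ha (le_pt hab m j)
      have hxjj : x j ≤ x (j+1) := pt_mono hab m (by omega)
      have hxj1b : x (j+1) ≤ b := pt_le hab (by omega) hmne
      have hd := hδ (x j) (x (j+1)) b hxj0 hxjj hxj1b hb
      have hxa : a ≤ x j := le_pt hab m j
      have hmono : c * (b - x j) ^ θ ≤ c * (b - a) ^ θ := by
        have h1 : (0:ℝ) ≤ b - x j := by linarith
        have h2 : b - x j ≤ b - a := by linarith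
        have := Real.rpow_le_rpow h1 h2 hθ
        nlinarith
      calc ‖(∑ i ∈ Finset.range (j+1), A (x i) (x (i+1))) + A (x (j+1)) b - A a b‖
          = ‖(((∑ i ∈ Finset.range j, A (x i) (x (i+1))) + A (x j) b - A a b) -
              (A (x j) b - A (x j) (x (j+1)) - A (x (j+1)) b))‖ := by
            rw [Finset.sum_range_succ]; congr 1; abel
        _ ≤ ‖(∑ i ∈ Finset.range j, A (x i) (x (i+1))) + A (x j) b - A a b‖ +
            ‖A (x j) b - A (x j) (x (j+1)) - A (x (j+1)) b‖ := norm_sub_le _ _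
        _ ≤ j * (c * (b - a) ^ θ) + c * (b - x j) ^ θ := add_le_add (ih hj') hd
        _ ≤ j * (c * (b - a) ^ θ) + c * (b - a) ^ θ := by linarith
        _ = (j+1 : ℕ) * (c * (b - a) ^ θ) := by push_cast; ring
  have hfin := key m' (by omega)
  have hRSval : RS A m a b
      = (∑ i ∈ Finset.range m', A (x i) (x (i+1))) + A (x m') b := by
    unfold RS
    rw [show m = m' + 1 from hm, Finset.sum_range_succ]
    congr 1
    rw [show m' + 1 = m from hm.symm, pt_last a b hmne]
  rw [hRSval]
  exact hfin

/-- Refinement estimate, simplified form. -/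
lemma refineBound (hδ : Hdelta T θ c A) (hc : 0 ≤ c) (hθ : 1 ≤ θ)
    {a b : ℝ} (ha : 0 ≤ a) (hab : a ≤ b) (hb : b ≤ T) {q : ℕ} (hq : q ≠ 0) (m' : ℕ) :
    ‖RS A (q*(m'+1)) a b - RS A q a b‖ ≤ c * (b - a) ^ θ * m' * (q:ℝ) ^ ((1:ℝ) - θ) := by
  have hθ0 : (0:ℝ) ≤ θ := by linarith
  have hqR : (0:ℝ) < (q:ℝ) := by exact_mod_cast Nat.pos_of_ne_zero hq
  have hRS : RS A q a b = ∑ i ∈ Finset.range q, A (pt a b q i) (pt a b q (i+1)) := rfl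
  rw [RS_blocks A hq (by omega) a b, hRS, ← Finset.sum_sub_distrib]
  calc ‖∑ i ∈ Finset.range q,
        (RS A (m'+1) (pt a b q i) (pt a b q (i+1)) - A (pt a b q i) (pt a b q (i+1)))‖
      ≤ ∑ i ∈ Finset.range q, ‖RS A (m'+1) (pt a b q i) (pt a b q (i+1)) -
          A (pt a b q i) (pt a b q (i+1))‖ := norm_sum_le _ _
    _ ≤ ∑ i ∈ Finset.range q, m' * (c * ((b-a)/q) ^ θ) := by
        refine Finset.sum_le_sum fun i hi => ?_
        have hi' : i + 1 ≤ q := by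
          rw [Finset.mem_range] at hi; omega
        have h1 : 0 ≤ pt a b q i := le_trans ha (le_pt hab q i)
        have h2 : pt a b q i ≤ pt a b q (i+1) := pt_mono hab q (by omega)
        have h3 : pt a b q (i+1) ≤ T := le_trans (pt_le hab hi' hq) hb
        have := crude hδ hc hθ0 h1 h2 h3 m'
        rwa [pt_succ_sub a b hq i] at this
    _ = q * (m' * (c * ((b-a)/q) ^ θ)) := by
        rw [Finset.sum_const, Finset.card_range]; simp [nsmul_eq_mul]
    _ = c * (b - a) ^ θ * m' * (q:ℝ) ^ ((1:ℝ) - θ) := by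
        rw [Real.div_rpow (by linarith) hqR.le,
          Real.rpow_sub hqR, Real.rpow_one]
        field_simp

/-- Constant for the sewing lemma, depending only on `θ`. -/
noncomputable def Kc (θ : ℝ) : ℝ :=
  (2:ℝ)^(θ-1) * ∑' k : ℕ, ((k:ℝ)+1) * ((2:ℝ)^((1:ℝ)-θ))^k

lemma Kc_nonneg (θ : ℝ) : 0 ≤ Kc θ := by
  apply mul_nonneg (by positivity)
  apply tsum_nonneg
  intro k
  positivity

lemma two_pow_pred_le_factorial : ∀ k : ℕ, 2^(k-1) ≤ Nat.factorial k := by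
  intro k
  induction k with
  | zero => simp [Nat.factorial]
  | succ k ih =>
    rcases Nat.eq_zero_or_pos k with hk | hk
    · subst hk; simp [Nat.factorial]
    · have h1 : k + 1 - 1 = (k - 1) + 1 := by omega
      rw [h1, pow_succ, Nat.factorial_succ]
      have h2 : 2 ≤ k + 1 := by omega
      calc 2^(k-1) * 2 ≤ Nat.factorial k * (k+1) := Nat.mul_le_mul ih h2
        _ = (k+1) * Nat.factorial k := Nat.mul_comm _ _

theorem abstract_sewing (hT : 0 ≤ T) (hθ : 1 < θ) (hc : 0 ≤ c)
    (hδ : Hdelta T θ c A)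
    (hAc : ContinuousOn (fun p : ℝ × ℝ => A p.1 p.2)
      {p : ℝ × ℝ | 0 ≤ p.1 ∧ p.1 ≤ p.2 ∧ p.2 ≤ T}) :
    ∃ I : ℝ → E, I 0 = 0 ∧
      ∀ s t : ℝ, 0 ≤ s → s ≤ t → t ≤ T →
        ‖I t - I s - A s t‖ ≤ Kc θ * (c * (t - s) ^ θ) := by
  set r : ℝ := (2:ℝ)^((1:ℝ)-θ) with hrdef
  have hr0 : 0 < r := Real.rpow_pos_of_pos two_pos _
  have hr1 : r < 1 := Real.rpow_lt_one_of_one_lt_of_neg one_lt_two (by linarith)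
  set e : ℕ → ℝ := fun k => ((k:ℝ)+1) * r^k with hedef
  have he0 : ∀ k, 0 ≤ e k := fun k => by positivity
  have hesum : Summable e := by
    have h1 : Summable (fun k : ℕ => (k:ℝ) * r^k) := by
      have := summable_pow_mul_geometric_of_norm_lt_one (R := ℝ) 1
        (r := r) (by rwa [Real.norm_of_nonneg hr0.le])
      simpa using this
    have h2 : Summable (fun k : ℕ => r^k) := summable_geometric_of_lt_one hr0.le hr1
    exact (h1.add h2).congr (fun k => by simp [hedef]; ring)
  have hrinv : r⁻¹ = (2:ℝ)^(θ-1) := by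
    rw [hrdef, ← Real.rpow_neg (by norm_num : (0:ℝ) ≤ 2) ((1:ℝ)-θ), neg_sub]
  -- step estimate along factorials
  have hstep : ∀ s t : ℝ, 0 ≤ s → s ≤ t → t ≤ T → ∀ k : ℕ,
      dist (RS A (Nat.factorial k) s t) (RS A (Nat.factorial (k+1)) s t)
        ≤ (c * (t-s)^θ * (2:ℝ)^(θ-1)) * e k := by
    intro s t hs hst ht k
    have hts : (0:ℝ) ≤ t - s := by linarith
    rcases Nat.eq_zero_or_pos k with hk0 | hkpos
    · subst hk0
      have : Nat.factorial 1 = Nat.factorial 0 := rfl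
      rw [this, dist_self]
      have : (0:ℝ) ≤ e 0 := he0 0
      positivity
    · have hfs : Nat.factorial (k+1) = Nat.factorial k * (k+1) := by
        rw [Nat.factorial_succ]; ring
      rw [dist_eq_norm, norm_sub_rev, hfs]
      have href := refineBound hδ hc hθ.le hs hst ht (Nat.factorial_ne_zero k) k
      refine href.trans ?_
      have h1 : ((Nat.factorial k : ℝ)) ^ ((1:ℝ) - θ) ≤ r ^ (k-1 : ℕ) := by
        have hle : ((2:ℝ))^((k-1:ℕ)) ≤ (Nat.factorial k : ℝ) := by
          exact_mod_cast two_pow_pred_le_factorial k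
        have h2 := Real.rpow_le_rpow_of_nonpos (by positivity) hle
          (by linarith : (1:ℝ) - θ ≤ 0)
        refine h2.trans_eq ?_
        rw [← Real.rpow_natCast (2:ℝ) (k-1), ← Real.rpow_mul (by norm_num), mul_comm,
          Real.rpow_mul (by norm_num), Real.rpow_natCast]
      have h2 : r ^ (k-1:ℕ) = r ^ k * (2:ℝ)^(θ-1) := by
        rw [← hrinv]
        have h3 : r ^ (k-1:ℕ) * r = r ^ k := by
          rw [← pow_succ]; congr 1; omega
        field_simp
        linarith [h3]
      have hnn : (0:ℝ) ≤ c * (t-s)^θ * k := by positivity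
      calc c * (t-s)^θ * (k:ℝ) * ((Nat.factorial k : ℝ)) ^ ((1:ℝ) - θ)
          ≤ c * (t-s)^θ * (k:ℝ) * (r ^ k * (2:ℝ)^(θ-1)) := by
            rw [← h2]
            exact mul_le_mul_of_nonneg_left h1 hnn
        _ ≤ c * (t-s)^θ * ((k:ℝ)+1) * (r ^ k * (2:ℝ)^(θ-1)) := by
            have : (0:ℝ) ≤ r ^ k * (2:ℝ)^(θ-1) := by positivity
            have h4 : c * (t-s)^θ * (k:ℝ) ≤ c * (t-s)^θ * ((k:ℝ)+1) :=
              mul_le_mul_of_nonneg_left (by linarith) (by positivity)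
            exact mul_le_mul_of_nonneg_right h4 this
        _ = (c * (t-s)^θ * (2:ℝ)^(θ-1)) * e k := by rw [hedef]; ring
  have hDsum : ∀ s t : ℝ, Summable (fun k => (c * (t-s)^θ * (2:ℝ)^(θ-1)) * e k) :=
    fun s t => hesum.mul_left _
  have hcauchy : ∀ s t : ℝ, 0 ≤ s → s ≤ t → t ≤ T →
      CauchySeq (fun k => RS A (Nat.factorial k) s t) :=
    fun s t hs hst ht =>
      cauchySeq_of_dist_le_of_summable _ (hstep s t hs hst ht) (hDsum s t)
  have htends : ∀ s t : ℝ, 0 ≤ s → s ≤ t → t ≤ T →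
      Tendsto (fun k => RS A (Nat.factorial k) s t) atTop (𝓝 (Iint A s t)) :=
    fun s t hs hst ht => (hcauchy s t hs hst ht).tendsto_limUnder
  have hRS1 : ∀ s t : ℝ, RS A 1 s t = A s t := by
    intro s t
    unfold RS
    rw [Finset.sum_range_one, pt_zero,
      show pt s t 1 (0+1) = t from by unfold pt; push_cast; ring]
  have hIA : ∀ s t : ℝ, 0 ≤ s → s ≤ t → t ≤ T →
      ‖A s t - Iint A s t‖ ≤ Kc θ * (c * (t-s)^θ) := by
    intro s t hs hst ht
    have h := dist_le_tsum_of_dist_le_of_tendsto₀ _ (hstep s t hs hst ht) (hDsum s t)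
      (htends s t hs hst ht)
    have h0 : RS A (Nat.factorial 0) s t = A s t := by
      rw [show Nat.factorial 0 = 1 from rfl, hRS1]
    rw [h0, dist_eq_norm] at h
    refine h.trans ?_
    rw [tsum_mul_left, Kc]
    ring_nf
    exact le_of_eq (by congr 1; exact tsum_congr fun k => by simp only [hedef, hrdef]; ring)
  have htail : ∀ s t : ℝ, 0 ≤ s → s ≤ t → t ≤ T → ∀ n : ℕ,
      dist (RS A (Nat.factorial n) s t) (Iint A s t)
        ≤ (c * T^θ * (2:ℝ)^(θ-1)) * ∑' k, e (k + n) := by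
    intro s t hs hst ht n
    have h := dist_le_tsum_of_dist_le_of_tendsto _ (hstep s t hs hst ht) (hDsum s t)
      (htends s t hs hst ht) n
    refine h.trans ?_
    calc ∑' m, (c * (t-s)^θ * (2:ℝ)^(θ-1)) * e (n + m)
        = (c * (t-s)^θ * (2:ℝ)^(θ-1)) * ∑' m, e (n + m) := tsum_mul_left
      _ ≤ (c * T^θ * (2:ℝ)^(θ-1)) * ∑' m, e (n + m) := by
          have h1 : (0:ℝ) ≤ ∑' m, e (n + m) := tsum_nonneg (fun _ => he0 _)
          have h2 : (t-s)^θ ≤ T^θ :=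
            Real.rpow_le_rpow (by linarith) (by linarith) (by linarith)
          have h3 : (0:ℝ) ≤ (2:ℝ)^(θ-1) := by positivity
          have h4 : c * (t-s)^θ * (2:ℝ)^(θ-1) ≤ c * T^θ * (2:ℝ)^(θ-1) := by
            apply mul_le_mul_of_nonneg_right _ h3
            exact mul_le_mul_of_nonneg_left h2 hc
          exact mul_le_mul_of_nonneg_right h4 h1
      _ = (c * T^θ * (2:ℝ)^(θ-1)) * ∑' k, e (k + n) := by
          congr 1
          exact tsum_congr fun m => by rw [add_comm]
  have hzeroA : ∀ v : ℝ, 0 ≤ v → v ≤ T → A v v = 0 := by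
    intro v hv hvT
    have h := hδ v v v hv le_rfl le_rfl hvT
    have h2 : A v v - A v v - A v v = -(A v v) := by abel
    rw [h2, norm_neg, sub_self, Real.zero_rpow (by linarith : θ ≠ 0), mul_zero] at h
    exact norm_le_zero_iff.mp h
  have hRSzero : ∀ (n : ℕ) (v : ℝ), 0 ≤ v → v ≤ T → RS A n v v = 0 := by
    intro n v hv hvT
    unfold RS
    have hp : ∀ j : ℕ, pt v v n j = v := by intro j; unfold pt; simp
    simp [hp, hzeroA v hv hvT]
  have hIintzero : ∀ v : ℝ, 0 ≤ v → v ≤ T → Iint A v v = 0 := by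
    intro v hv hvT
    have h : Tendsto (fun k => RS A (Nat.factorial k) v v) atTop (𝓝 0) := by
      have : (fun k => RS A (Nat.factorial k) v v) = fun _ => (0:E) := by
        funext k; exact hRSzero _ v hv hvT
      rw [this]; exact tendsto_const_nhds
    exact h.limUnder_eq
  -- continuity of RS and Iint on the triangle
  set tri : Set (ℝ×ℝ) := {p : ℝ×ℝ | 0 ≤ p.1 ∧ p.1 ≤ p.2 ∧ p.2 ≤ T} with htri
  have hRScont : ∀ n : ℕ, n ≠ 0 → ContinuousOn (fun p : ℝ×ℝ => RS A n p.1 p.2) tri := by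
    intro n hn
    unfold RS
    apply continuousOn_finset_sum
    intro j hj
    have hj' : j + 1 ≤ n := Finset.mem_range.mp hj
    have hmaps : MapsTo (fun p : ℝ×ℝ => (pt p.1 p.2 n j, pt p.1 p.2 n (j+1))) tri tri := by
      intro p hp
      obtain ⟨h1, h2, h3⟩ := hp
      exact ⟨le_trans h1 (le_pt h2 n j), pt_mono h2 n (by omega),
        le_trans (pt_le h2 hj' hn) h3⟩
    have hcont2 : Continuous (fun p : ℝ×ℝ => (pt p.1 p.2 n j, pt p.1 p.2 n (j+1))) := by
      unfold pt; fun_prop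
    exact hAc.comp hcont2.continuousOn hmaps
  have hIcont : ContinuousOn (fun p : ℝ×ℝ => Iint A p.1 p.2) tri := by
    have huni : TendstoUniformlyOn (fun k (p : ℝ×ℝ) => RS A (Nat.factorial k) p.1 p.2)
        (fun p => Iint A p.1 p.2) atTop tri := by
      rw [Metric.tendstoUniformlyOn_iff]
      intro ε hε
      have htail0 : Tendsto (fun n : ℕ => (c * T^θ * (2:ℝ)^(θ-1)) * ∑' k, e (k + n))
          atTop (𝓝 0) := by
        have h := (tendsto_sum_nat_add e).const_mul (c * T^θ * (2:ℝ)^(θ-1))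
        simpa using h
      filter_upwards [htail0.eventually (gt_mem_nhds hε)] with n hn p hp
      obtain ⟨h1, h2, h3⟩ := hp
      calc dist (Iint A p.1 p.2) (RS A (Nat.factorial n) p.1 p.2)
          = dist (RS A (Nat.factorial n) p.1 p.2) (Iint A p.1 p.2) := dist_comm _ _
        _ ≤ (c * T^θ * (2:ℝ)^(θ-1)) * ∑' k, e (k + n) := htail p.1 p.2 h1 h2 h3 n
        _ < ε := hn
    exact huni.continuousOn (Eventually.of_forall fun k => hRScont _ (Nat.factorial_ne_zero k)).frequently
  -- convergence of RS A (k!/m)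
  have hdivtends : ∀ m : ℕ, m ≠ 0 → ∀ a b : ℝ, 0 ≤ a → a ≤ b → b ≤ T →
      Tendsto (fun k => RS A (Nat.factorial k / m) a b) atTop (𝓝 (Iint A a b)) := by
    intro m hm a b ha hab hb
    rw [tendsto_iff_dist_tendsto_zero]
    have hg0 : Tendsto (fun k : ℕ =>
        c * (b-a)^θ * m * (((k-1).factorial : ℝ))^((1:ℝ)-θ)
          + dist (RS A (Nat.factorial k) a b) (Iint A a b)) atTop (𝓝 0) := by
      have t1 : Tendsto (fun k : ℕ => (((k-1).factorial : ℝ))^((1:ℝ)-θ)) atTop (𝓝 0) := by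
        have h5 : Tendsto (fun k : ℕ => (((k-1).factorial : ℝ))) atTop atTop := by
          apply tendsto_natCast_atTop_atTop.comp
          exact (tendsto_atTop_mono (fun k => Nat.self_le_factorial _)
            (tendsto_sub_atTop_nat 1))
        have h6 : Tendsto (fun x : ℝ => x^((1:ℝ)-θ)) atTop (𝓝 0) := by
          have h7 := tendsto_rpow_neg_atTop (y := θ - 1) (by linarith)
          simpa [neg_sub] using h7
        exact h6.comp h5
      have t2 : Tendsto (fun k => dist (RS A (Nat.factorial k) a b) (Iint A a b))
          atTop (𝓝 0) := tendsto_iff_dist_tendsto_zero.mp (htends a b ha hab hb)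
      have := ((t1.const_mul (c * (b-a)^θ * m)).add t2)
      simpa using this
    apply squeeze_zero' (Eventually.of_forall fun _ => dist_nonneg) _ hg0
    filter_upwards [eventually_ge_atTop m, eventually_ge_atTop 1] with k hkm hk1
    have hdvd : m ∣ Nat.factorial k := Nat.dvd_factorial (Nat.pos_of_ne_zero hm) hkm
    set q := Nat.factorial k / m with hq
    have hqm : q * m = Nat.factorial k := Nat.div_mul_cancel hdvd
    have hq0 : q ≠ 0 := by
      intro h
      rw [h, zero_mul] at hqm
      exact (Nat.factorial_ne_zero k) hqm.symm
    obtain ⟨m', rfl⟩ : ∃ m'', m = m'' + 1 := ⟨m - 1, by omega⟩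
    have h1 : ‖RS A (q*(m'+1)) a b - RS A q a b‖
        ≤ c*(b-a)^θ * m' * (q:ℝ)^((1:ℝ)-θ) :=
      refineBound hδ hc hθ.le ha hab hb hq0 m'
    have hqge : (k-1).factorial ≤ q := by
      have h2 : Nat.factorial k / k ≤ q := Nat.div_le_div_left hkm (Nat.pos_of_ne_zero hm)
      have h3 : Nat.factorial k / k = (k-1).factorial := by
        obtain ⟨k', rfl⟩ : ∃ k'', k = k'' + 1 := ⟨k - 1, by omega⟩
        rw [Nat.factorial_succ]
        simp [Nat.mul_div_cancel_left _ (Nat.succ_pos k')]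
      omega
    have h4 : ((q:ℝ))^((1:ℝ)-θ) ≤ (((k-1).factorial : ℝ))^((1:ℝ)-θ) := by
      apply Real.rpow_le_rpow_of_nonpos
      · exact_mod_cast Nat.pos_of_ne_zero (Nat.factorial_ne_zero (k-1))
      · exact_mod_cast hqge
      · linarith
    have h5 : ‖RS A q a b - RS A (Nat.factorial k) a b‖
        ≤ c*(b-a)^θ * (m'+1) * (((k-1).factorial : ℝ))^((1:ℝ)-θ) := by
      rw [← hqm, show q * (m'+1) = q * (m'+1) from rfl]
      rw [norm_sub_rev] at h1 ⊢
      rw [norm_sub_rev]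
      refine h1.trans ?_
      have hb1 : (0:ℝ) ≤ c*(b-a)^θ := by
        have : (0:ℝ) ≤ b - a := by linarith
        positivity
      have hb2 : c*(b-a)^θ * m' * (q:ℝ)^((1:ℝ)-θ)
          ≤ c*(b-a)^θ * m' * (((k-1).factorial : ℝ))^((1:ℝ)-θ) :=
        mul_le_mul_of_nonneg_left h4 (by positivity)
      refine hb2.trans ?_
      apply mul_le_mul_of_nonneg_right _ (by positivity)
      nlinarith [hb1]
    calc dist (RS A q a b) (Iint A a b)
        ≤ dist (RS A q a b) (RS A (Nat.factorial k) a b)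
          + dist (RS A (Nat.factorial k) a b) (Iint A a b) := dist_triangle _ _ _
      _ ≤ c*(b-a)^θ * (m'+1) * (((k-1).factorial : ℝ))^((1:ℝ)-θ)
          + dist (RS A (Nat.factorial k) a b) (Iint A a b) := by
            rw [dist_eq_norm]
            exact add_le_add h5 le_rfl
      _ = c * (b-a)^θ * (m'+1 : ℕ) * (((k-1).factorial : ℝ))^((1:ℝ)-θ)
          + dist (RS A (Nat.factorial k) a b) (Iint A a b) := by push_cast; ring_nf
  -- additivity over uniform partitions
  have haddunif : ∀ m : ℕ, m ≠ 0 → ∀ a b : ℝ, 0 ≤ a → a ≤ b → b ≤ T →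
      Iint A a b = ∑ i ∈ Finset.range m, Iint A (pt a b m i) (pt a b m (i+1)) := by
    intro m hm a b ha hab hb
    have hsum : Tendsto (fun k => ∑ i ∈ Finset.range m,
        RS A (Nat.factorial k / m) (pt a b m i) (pt a b m (i+1))) atTop
        (𝓝 (∑ i ∈ Finset.range m, Iint A (pt a b m i) (pt a b m (i+1)))) := by
      apply tendsto_finset_sum
      intro i hi
      have hi' : i + 1 ≤ m := Finset.mem_range.mp hi
      exact hdivtends m hm _ _ (le_trans ha (le_pt hab m i)) (pt_mono hab m (by omega))
        (le_trans (pt_le hab hi' hm) hb)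
    have hlim2 : Tendsto (fun k => RS A (Nat.factorial k) a b) atTop
        (𝓝 (∑ i ∈ Finset.range m, Iint A (pt a b m i) (pt a b m (i+1)))) := by
      apply hsum.congr'
      filter_upwards [eventually_ge_atTop m] with k hkm
      have hdvd : m ∣ Nat.factorial k := Nat.dvd_factorial (Nat.pos_of_ne_zero hm) hkm
      have hq0 : Nat.factorial k / m ≠ 0 := by
        have := Nat.factorial_ne_zero k
        have h2 := Nat.div_mul_cancel hdvd
        intro h
        rw [h, zero_mul] at h2
        exact this h2.symm
      rw [← RS_blocks A hm hq0 a b, Nat.mul_div_cancel' hdvd]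
    exact tendsto_nhds_unique (htends a b ha hab hb) hlim2
  -- additivity at rational ratios
  have hrat : ∀ a b : ℝ, 0 ≤ a → a ≤ b → b ≤ T → ∀ p q : ℕ, q ≠ 0 → p ≤ q →
      Iint A a b = Iint A a (pt a b q p) + Iint A (pt a b q p) b := by
    intro a b ha hab hb p q hqne hpq
    have h0b : 0 ≤ b := le_trans ha hab
    have hu1 : a ≤ pt a b q p := le_pt hab q p
    have hu2 : pt a b q p ≤ b := pt_le hab hpq hqne
    rcases Nat.eq_zero_or_pos p with hp0 | hppos
    · subst hp0
      rw [pt_zero, hIintzero a ha (le_trans hab hb), zero_add]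
    rcases eq_or_lt_of_le hpq with hpq' | hplt
    · subst hpq'
      rw [pt_last a b hqne, hIintzero b h0b hb, add_zero]
    · have e1 := haddunif q hqne a b ha hab hb
      have e2 := haddunif p (by omega) a (pt a b q p) ha hu1 (le_trans hu2 hb)
      have e3 := haddunif (q - p) (by omega) (pt a b q p) b (le_trans ha hu1) hu2 hb
      rw [e1, e2, e3]
      have hsplit := Finset.sum_range_add
        (fun i => Iint A (pt a b q i) (pt a b q (i+1))) p (q-p)
      rw [show p + (q - p) = q from by omega] at hsplit
      rw [hsplit]
      congr 1
      · apply Finset.sum_congr rfl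
        intro i _
        rw [pt_compat₁ (by omega) hqne i, pt_compat₁ (by omega) hqne (i+1)]
      · apply Finset.sum_congr rfl
        intro i _
        rw [pt_compat₂ hplt i, pt_compat₂ hplt (i+1),
          show p + (i+1) = p + i + 1 from by omega]
  -- full additivity
  have hIadd : ∀ a u b : ℝ, 0 ≤ a → a ≤ u → u ≤ b → b ≤ T →
      Iint A a b = Iint A a u + Iint A u b := by
    intro a u b ha hau hub hbT
    have haT : a ≤ T := le_trans hau (le_trans hub hbT)
    rcases eq_or_lt_of_le hau with h | hau'
    · rw [← h, hIintzero a ha haT, zero_add]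
    rcases eq_or_lt_of_le hub with h | hub'
    · rw [h, hIintzero b (le_trans (le_trans ha hau) hub) hbT, add_zero]
    set ρ : ℝ := (u - a)/(b - a) with hρ
    have hba : (0:ℝ) < b - a := by linarith
    have hρ0 : 0 < ρ := div_pos (by linarith) hba
    have hρ1 : ρ < 1 := by rw [hρ, div_lt_one hba]; linarith
    have hchoice : ∀ n : ℕ, ∃ ζ : ℚ, max 0 (ρ - 1/(n+1)) < (ζ:ℝ) ∧ (ζ:ℝ) < ρ := by
      intro n
      apply exists_rat_btwn
      apply max_lt hρ0
      have : (0:ℝ) < 1/((n:ℝ)+1) := by positivity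
      linarith
    choose ζ hζ1 hζ2 using hchoice
    have hζpos : ∀ n, 0 < (ζ n : ℝ) := fun n => lt_of_le_of_lt (le_max_left _ _) (hζ1 n)
    have hζlt1 : ∀ n, (ζ n : ℝ) < 1 := fun n => lt_trans (hζ2 n) hρ1
    set w : ℕ → ℝ := fun n => a + (ζ n : ℝ) * (b - a) with hw
    have hwtend : Tendsto w atTop (𝓝 u) := by
      have hζtend : Tendsto (fun n => (ζ n : ℝ)) atTop (𝓝 ρ) := by
        apply tendsto_of_tendsto_of_tendsto_of_le_of_le
          (g := fun n : ℕ => ρ - 1/((n:ℝ)+1)) (h := fun _ : ℕ => ρ)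
        · have h8 := tendsto_one_div_add_atTop_nhds_zero_nat (𝕜 := ℝ)
          have h9 := (tendsto_const_nhds (x := ρ) (f := atTop (α := ℕ))).sub h8
          simpa using h9
        · exact tendsto_const_nhds
        · intro n
          exact le_trans (le_max_right _ _) (hζ1 n).le
        · exact fun n => (hζ2 n).le
      have h10 : Tendsto (fun n => a + (ζ n : ℝ) * (b - a)) atTop
          (𝓝 (a + ρ * (b - a))) := tendsto_const_nhds.add (hζtend.mul tendsto_const_nhds)
      have hval : a + ρ * (b - a) = u := by
        rw [hρ]; field_simp; ring
      rwa [hval] at h10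
    have hwn : ∀ n, Iint A a b = Iint A a (w n) + Iint A (w n) b := by
      intro n
      have hnum : 0 < (ζ n).num := Rat.num_pos.mpr (by exact_mod_cast hζpos n)
      have hcast : (((ζ n).num.toNat : ℝ))/((ζ n).den : ℝ) = ((ζ n : ℝ)) := by
        rw [Rat.cast_def]
        congr 1
        exact_mod_cast Int.toNat_of_nonneg hnum.le
      have hple : (ζ n).num.toNat ≤ (ζ n).den := by
        have hq : ζ n < 1 := by exact_mod_cast hζlt1 n
        have := Rat.lt_one_iff_num_lt_denom.mpr hq
        omega
      have hptw : pt a b (ζ n).den (ζ n).num.toNat = w n := by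
        rw [hw]
        unfold pt
        have h11 : ((ζ n).num.toNat : ℝ) * (b - a) / ((ζ n).den : ℝ)
            = (((ζ n).num.toNat : ℝ))/((ζ n).den : ℝ) * (b - a) := by ring
        simp only []
        rw [h11, hcast]
      have hrat' := hrat a b ha (by linarith) hbT (ζ n).num.toNat (ζ n).den
        (ζ n).den_nz hple
      rwa [hptw] at hrat'
    have hφcont : ContinuousOn (fun v => Iint A a v + Iint A v b) (Icc a b) := by
      apply ContinuousOn.add
      · apply hIcont.comp (g := fun p : ℝ×ℝ => Iint A p.1 p.2)
          ((continuous_const.prodMk continuous_id).continuousOn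
            (s := Icc a b))
        intro v hv
        exact ⟨ha, hv.1, le_trans hv.2 hbT⟩
      · apply hIcont.comp (g := fun p : ℝ×ℝ => Iint A p.1 p.2)
          ((continuous_id.prodMk continuous_const).continuousOn (s := Icc a b))
        intro v hv
        exact ⟨le_trans ha hv.1, hv.2, hbT⟩
    have humem : u ∈ Icc a b := ⟨hau, hub⟩
    have hwmem : ∀ n, w n ∈ Icc a b := by
      intro n
      constructor
      · rw [hw]
        simp only []
        nlinarith [hζpos n, hba]
      · rw [hw]
        simp only []
        nlinarith [hζlt1 n, hba, hζpos n]
    have hφtend : Tendsto (fun n => Iint A a (w n) + Iint A (w n) b) atTop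
        (𝓝 (Iint A a u + Iint A u b)) := by
      have h12 := (hφcont u humem).tendsto
      exact h12.comp (tendsto_nhdsWithin_of_tendsto_nhds_of_eventually_within w hwtend
        (Eventually.of_forall hwmem))
    have hconst : Tendsto (fun n : ℕ => Iint A a b) atTop (𝓝 (Iint A a b)) :=
      tendsto_const_nhds
    exact tendsto_nhds_unique (hconst.congr fun n => hwn n) hφtend
  -- conclusion
  refine ⟨fun t => Iint A 0 t, hIintzero 0 le_rfl hT, ?_⟩
  intro s t hs hst ht
  have hadd := hIadd 0 s t le_rfl hs hst ht
  show ‖Iint A 0 t - Iint A 0 s - A s t‖ ≤ Kc θ * (c * (t - s) ^ θ)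
  rw [hadd]
  have heq : Iint A 0 s + Iint A s t - Iint A 0 s - A s t = -(A s t - Iint A s t) := by abel
  rw [heq, norm_neg]
  exact hIA s t hs hst ht

end Sew

end SewingAux

set_option maxHeartbeats 1600000 in
/-- Nonlinear Young integral (sewing). -/
theorem stmt_9 (θ : ℝ) (hθ : 1 < θ) :
    ∃ K : ℝ, 0 < K ∧
      ∀ (d : ℕ) (T γ η C M : ℝ), 0 < T → γ ∈ Set.Ioo (0 : ℝ) 1 → η ∈ Set.Ioo (0 : ℝ) 1 →
        γ + η = θ → 0 ≤ C → 0 ≤ M →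
        ∀ (Γ : ℝ → EuclideanSpace ℝ (Fin d) → EuclideanSpace ℝ (Fin d))
          (y : ℝ → EuclideanSpace ℝ (Fin d)),
        (∀ s t, 0 ≤ s → s ≤ t → t ≤ T → ∀ x, ‖Γ t x - Γ s x‖ ≤ C * (t - s) ^ γ) →
        (∀ s t, 0 ≤ s → s ≤ t → t ≤ T → ∀ x z,
          ‖(Γ t x - Γ s x) - (Γ t z - Γ s z)‖ ≤ C * ‖x - z‖ * (t - s) ^ γ) →
        (∀ s t, 0 ≤ s → s ≤ t → t ≤ T → ‖y t - y s‖ ≤ M * (t - s) ^ η) →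
        ∃ I : ℝ → EuclideanSpace ℝ (Fin d),
          I 0 = 0 ∧
          (∀ s t, 0 ≤ s → s ≤ t → t ≤ T →
            ‖I t - I s - (Γ t (y s) - Γ s (y s))‖ ≤ K * C * M * (t - s) ^ (γ + η)) ∧
          (∃ N : ℝ, ∀ s t, 0 ≤ s → s ≤ t → t ≤ T → ‖I t - I s‖ ≤ N * (t - s) ^ γ) ∧
          (∀ J : ℝ → EuclideanSpace ℝ (Fin d), J 0 = 0 →
            (∀ s t, 0 ≤ s → s ≤ t → t ≤ T →
              ‖J t - J s - (Γ t (y s) - Γ s (y s))‖ ≤ K * C * M * (t - s) ^ (γ + η)) →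
            ∀ t ∈ Set.Icc (0 : ℝ) T, J t = I t) := by
  have hKc := Sew.Kc_nonneg θ
  refine ⟨Sew.Kc θ + 1, by linarith, ?_⟩
  intro d T γ η C M hT hγ hη hγη hC hM Γ y hΓ1 hΓ2 hy
  obtain ⟨hγ0, hγ1⟩ := hγ
  obtain ⟨hη0, hη1⟩ := hη
  set K : ℝ := Sew.Kc θ + 1 with hK
  set A : ℝ → ℝ → EuclideanSpace ℝ (Fin d) := fun s t => Γ t (y s) - Γ s (y s) with hA
  set c : ℝ := C * M with hc'
  have hc : 0 ≤ c := mul_nonneg hC hM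
  -- defect estimate
  have hδ : Sew.Hdelta T θ c A := by
    intro s u t hs hsu hut htT
    have h1 : A s t - A s u - A u t
        = (Γ t (y s) - Γ u (y s)) - (Γ t (y u) - Γ u (y u)) := by
      simp only [hA]
      abel
    rw [h1]
    have h2 := hΓ2 u t (le_trans hs hsu) hut htT (y s) (y u)
    have h3 := hy s u hs hsu (le_trans hut htT)
    have h4 : ‖y s - y u‖ ≤ M * (u - s) ^ η := by rw [norm_sub_rev]; exact h3
    have h5 : (u - s) ^ η ≤ (t - s) ^ η :=
      Real.rpow_le_rpow (by linarith) (by linarith) hη0.le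
    have h6 : (t - u) ^ γ ≤ (t - s) ^ γ :=
      Real.rpow_le_rpow (by linarith) (by linarith) hγ0.le
    have h7 : ‖y s - y u‖ ≤ M * (t - s) ^ η := by nlinarith
    have h8 : (0:ℝ) ≤ (t - u) ^ γ := Real.rpow_nonneg (by linarith) _
    have h9 : (0:ℝ) ≤ (t - s) ^ η := Real.rpow_nonneg (by linarith) _
    have h10 : ‖y s - y u‖ ≥ 0 := norm_nonneg _
    calc ‖(Γ t (y s) - Γ u (y s)) - (Γ t (y u) - Γ u (y u))‖
        ≤ C * ‖y s - y u‖ * (t - u) ^ γ := h2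
      _ ≤ C * ‖y s - y u‖ * (t - s) ^ γ :=
          mul_le_mul_of_nonneg_left h6 (mul_nonneg hC h10)
      _ ≤ C * (M * (t - s) ^ η) * (t - s) ^ γ := by
          have h11 : (0:ℝ) ≤ (t - s) ^ γ := Real.rpow_nonneg (by linarith) _
          exact mul_le_mul_of_nonneg_right (mul_le_mul_of_nonneg_left h7 hC) h11
      _ = c * (t - s) ^ θ := by
          rw [hc', ← hγη, add_comm γ η,
            Real.rpow_add_of_nonneg (by linarith : (0:ℝ) ≤ t - s) hη0.le hγ0.le]
          ring
  -- continuity of A on the triangle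
  have hAc : ContinuousOn (fun p : ℝ × ℝ => A p.1 p.2)
      {p : ℝ × ℝ | 0 ≤ p.1 ∧ p.1 ≤ p.2 ∧ p.2 ≤ T} := by
    have hΓt : ∀ t₁ t₂ : ℝ, ∀ x, 0 ≤ t₁ → t₁ ≤ T → 0 ≤ t₂ → t₂ ≤ T →
        ‖Γ t₂ x - Γ t₁ x‖ ≤ C * |t₂ - t₁| ^ γ := by
      intro t₁ t₂ x h1 h2 h3 h4
      rcases le_total t₁ t₂ with h | h
      · rw [abs_of_nonneg (by linarith)]
        exact hΓ1 t₁ t₂ h1 h h4 x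
      · rw [abs_of_nonpos (by linarith), norm_sub_rev, neg_sub]
        exact hΓ1 t₂ t₁ h3 h h2 x
    have hyd : ∀ s₁ s₂ : ℝ, 0 ≤ s₁ → s₁ ≤ T → 0 ≤ s₂ → s₂ ≤ T →
        ‖y s₂ - y s₁‖ ≤ M * |s₂ - s₁| ^ η := by
      intro s₁ s₂ h1 h2 h3 h4
      rcases le_total s₁ s₂ with h | h
      · rw [abs_of_nonneg (by linarith)]
        exact hy s₁ s₂ h1 h h4
      · rw [abs_of_nonpos (by linarith), norm_sub_rev, neg_sub]
        exact hy s₂ s₁ h3 h h2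
    have hGx : ∀ t : ℝ, ∀ x x₀, 0 ≤ t → t ≤ T →
        ‖(Γ t x - Γ 0 x) - (Γ t x₀ - Γ 0 x₀)‖ ≤ C * ‖x - x₀‖ * T ^ γ := by
      intro t x x₀ h1 h2
      have h3 := hΓ2 0 t le_rfl h1 h2 x x₀
      have h4 : (t - 0) ^ γ ≤ T ^ γ :=
        Real.rpow_le_rpow (by linarith) (by linarith) hγ0.le
      have h5 : (0:ℝ) ≤ C * ‖x - x₀‖ := by positivity
      calc ‖(Γ t x - Γ 0 x) - (Γ t x₀ - Γ 0 x₀)‖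
          ≤ C * ‖x - x₀‖ * (t - 0) ^ γ := h3
        _ ≤ C * ‖x - x₀‖ * T ^ γ := mul_le_mul_of_nonneg_left h4 h5
    have hAbound : ∀ p q : ℝ × ℝ,
        p ∈ {p : ℝ × ℝ | 0 ≤ p.1 ∧ p.1 ≤ p.2 ∧ p.2 ≤ T} →
        q ∈ {p : ℝ × ℝ | 0 ≤ p.1 ∧ p.1 ≤ p.2 ∧ p.2 ≤ T} →
        ‖A q.1 q.2 - A p.1 p.2‖ ≤ 2 * (C * M * T ^ γ) * |q.1 - p.1| ^ η
          + C * |q.2 - p.2| ^ γ + C * |q.1 - p.1| ^ γ := by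
      intro p q hp hq
      obtain ⟨hp1, hp2, hp3⟩ := hp
      obtain ⟨hq1, hq2, hq3⟩ := hq
      have hdec : A q.1 q.2 - A p.1 p.2
          = (((Γ q.2 (y q.1) - Γ 0 (y q.1)) - (Γ q.2 (y p.1) - Γ 0 (y p.1)))
            - ((Γ q.1 (y q.1) - Γ 0 (y q.1)) - (Γ q.1 (y p.1) - Γ 0 (y p.1))))
            + ((Γ q.2 (y p.1) - Γ p.2 (y p.1)) - (Γ q.1 (y p.1) - Γ p.1 (y p.1))) := by
        simp only [hA]
        abel
      have b1 := hGx q.2 (y q.1) (y p.1) (le_trans hq1 hq2) hq3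
      have b2 := hGx q.1 (y q.1) (y p.1) hq1 (le_trans hq2 hq3)
      have b3 := hΓt p.2 q.2 (y p.1) (le_trans hp1 hp2) hp3 (le_trans hq1 hq2) hq3
      have b4 := hΓt p.1 q.1 (y p.1) hp1 (le_trans hp2 hp3) hq1 (le_trans hq2 hq3)
      have b5 := hyd p.1 q.1 hp1 (le_trans hp2 hp3) hq1 (le_trans hq2 hq3)
      have b6 : (0:ℝ) ≤ T ^ γ := Real.rpow_nonneg (by linarith) _
      have b7 : (0:ℝ) ≤ |q.1 - p.1| ^ η := Real.rpow_nonneg (abs_nonneg _) _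
      calc ‖A q.1 q.2 - A p.1 p.2‖
          ≤ ‖((Γ q.2 (y q.1) - Γ 0 (y q.1)) - (Γ q.2 (y p.1) - Γ 0 (y p.1)))
              - ((Γ q.1 (y q.1) - Γ 0 (y q.1)) - (Γ q.1 (y p.1) - Γ 0 (y p.1)))‖
            + ‖(Γ q.2 (y p.1) - Γ p.2 (y p.1)) - (Γ q.1 (y p.1) - Γ p.1 (y p.1))‖ := by
              rw [hdec]; exact norm_add_le _ _
        _ ≤ (‖(Γ q.2 (y q.1) - Γ 0 (y q.1)) - (Γ q.2 (y p.1) - Γ 0 (y p.1))‖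
              + ‖(Γ q.1 (y q.1) - Γ 0 (y q.1)) - (Γ q.1 (y p.1) - Γ 0 (y p.1))‖)
            + (‖Γ q.2 (y p.1) - Γ p.2 (y p.1)‖ + ‖Γ q.1 (y p.1) - Γ p.1 (y p.1)‖) :=
              add_le_add (norm_sub_le _ _) (norm_sub_le _ _)
        _ ≤ (C * ‖y q.1 - y p.1‖ * T ^ γ + C * ‖y q.1 - y p.1‖ * T ^ γ)
            + (C * |q.2 - p.2| ^ γ + C * |q.1 - p.1| ^ γ) := by
              exact add_le_add (add_le_add b1 b2) (add_le_add b3 b4)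
        _ ≤ 2 * (C * M * T ^ γ) * |q.1 - p.1| ^ η
            + C * |q.2 - p.2| ^ γ + C * |q.1 - p.1| ^ γ := by
              have b8 : C * ‖y q.1 - y p.1‖ * T ^ γ ≤ C * (M * |q.1 - p.1| ^ η) * T ^ γ :=
                mul_le_mul_of_nonneg_right (mul_le_mul_of_nonneg_left b5 hC) b6
              nlinarith [b8]
    rw [Metric.continuousOn_iff]
    intro p hp ε hε
    set B : ℝ := 2 * (C * M * T ^ γ) + 2 * C + 1 with hB
    have hTγ : (0:ℝ) ≤ T ^ γ := Real.rpow_nonneg hT.le _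
    have hB0 : 0 < B := by positivity
    have hε2B : 0 < ε / 2 / B := by positivity
    refine ⟨min ((ε / 2 / B) ^ (η⁻¹)) ((ε / 2 / B) ^ (γ⁻¹)), by positivity, ?_⟩
    intro q hq hdist
    have hd1 : |q.1 - p.1| ≤ dist q p := by
      rw [Prod.dist_eq, ← Real.dist_eq]
      exact le_max_left _ _
    have hd2 : |q.2 - p.2| ≤ dist q p := by
      rw [Prod.dist_eq, ← Real.dist_eq]
      exact le_max_right _ _
    have he1 : |q.1 - p.1| ^ η ≤ ε / 2 / B := by
      have h1 : |q.1 - p.1| ≤ (ε / 2 / B) ^ (η⁻¹) :=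
        le_trans hd1 (le_trans hdist.le (min_le_left _ _))
      calc |q.1 - p.1| ^ η ≤ ((ε / 2 / B) ^ (η⁻¹)) ^ η :=
            Real.rpow_le_rpow (abs_nonneg _) h1 hη0.le
        _ = ε / 2 / B := Real.rpow_inv_rpow hε2B.le hη0.ne'
    have he2 : |q.2 - p.2| ^ γ ≤ ε / 2 / B := by
      have h1 : |q.2 - p.2| ≤ (ε / 2 / B) ^ (γ⁻¹) :=
        le_trans hd2 (le_trans hdist.le (min_le_right _ _))
      calc |q.2 - p.2| ^ γ ≤ ((ε / 2 / B) ^ (γ⁻¹)) ^ γ :=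
            Real.rpow_le_rpow (abs_nonneg _) h1 hγ0.le
        _ = ε / 2 / B := Real.rpow_inv_rpow hε2B.le hγ0.ne'
    have he3 : |q.1 - p.1| ^ γ ≤ ε / 2 / B := by
      have h1 : |q.1 - p.1| ≤ (ε / 2 / B) ^ (γ⁻¹) :=
        le_trans hd1 (le_trans hdist.le (min_le_right _ _))
      calc |q.1 - p.1| ^ γ ≤ ((ε / 2 / B) ^ (γ⁻¹)) ^ γ :=
            Real.rpow_le_rpow (abs_nonneg _) h1 hγ0.le
        _ = ε / 2 / B := Real.rpow_inv_rpow hε2B.le hγ0.ne'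
    have hfin := hAbound p q hp hq
    rw [dist_eq_norm]
    have hcm : (0:ℝ) ≤ C * M * T ^ γ := by positivity
    calc ‖A q.1 q.2 - A p.1 p.2‖
        ≤ 2 * (C * M * T ^ γ) * |q.1 - p.1| ^ η
          + C * |q.2 - p.2| ^ γ + C * |q.1 - p.1| ^ γ := hfin
      _ ≤ 2 * (C * M * T ^ γ) * (ε / 2 / B) + C * (ε / 2 / B) + C * (ε / 2 / B) := by
          have u1 := mul_le_mul_of_nonneg_left he1
            (by positivity : (0:ℝ) ≤ 2 * (C * M * T ^ γ))
          have u2 := mul_le_mul_of_nonneg_left he2 hC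
          have u3 := mul_le_mul_of_nonneg_left he3 hC
          linarith
      _ = (2 * (C * M * T ^ γ) + 2 * C) * (ε / 2 / B) := by ring
      _ < B * (ε / 2 / B) := by
          apply mul_lt_mul_of_pos_right _ hε2B
          rw [hB]; linarith
      _ = ε / 2 := by field_simp
      _ < ε := by linarith
  -- apply the abstract sewing lemma
  obtain ⟨I, hI0, hIb⟩ := Sew.abstract_sewing hT.le hθ hc hδ hAc
  have hbound : ∀ s t : ℝ, 0 ≤ s → s ≤ t → t ≤ T →
      ‖I t - I s - A s t‖ ≤ K * C * M * (t - s) ^ (γ + η) := by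
    intro s t hs hst ht
    refine (hIb s t hs hst ht).trans ?_
    rw [hγη]
    have h1 : (0:ℝ) ≤ (t - s) ^ θ := Real.rpow_nonneg (by linarith) _
    have h2 : (0:ℝ) ≤ C * M * (t - s) ^ θ := by positivity
    rw [hK, hc']
    nlinarith
  refine ⟨I, hI0, hbound, ⟨C + K * C * M * T ^ η, ?_⟩, ?_⟩
  · -- Hölder continuity
    intro s t hs hst ht
    have h1 := hbound s t hs hst ht
    have h2 := hΓ1 s t hs hst ht (y s)
    have h3 : ‖I t - I s‖ ≤ ‖I t - I s - A s t‖ + ‖A s t‖ := by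
      calc ‖I t - I s‖ = ‖(I t - I s - A s t) + A s t‖ := by congr 1; abel
        _ ≤ ‖I t - I s - A s t‖ + ‖A s t‖ := norm_add_le _ _
    have h4 : ‖A s t‖ ≤ C * (t - s) ^ γ := h2
    have h5 : (t - s) ^ (γ + η) ≤ (t - s) ^ γ * T ^ η := by
      rw [Real.rpow_add_of_nonneg (by linarith : (0:ℝ) ≤ t - s) hγ0.le hη0.le]
      have h6 : (t - s) ^ η ≤ T ^ η :=
        Real.rpow_le_rpow (by linarith) (by linarith) hη0.le
      exact mul_le_mul_of_nonneg_left h6 (Real.rpow_nonneg (by linarith) _)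
    have h7 : (0:ℝ) ≤ K * C * M := by
      rw [hK]; positivity
    have h8 : (0:ℝ) ≤ (t - s) ^ γ := Real.rpow_nonneg (by linarith) _
    nlinarith [mul_le_mul_of_nonneg_left h5 h7]
  · -- uniqueness
    intro J hJ0 hJb t htmem
    obtain ⟨ht0, htT⟩ := htmem
    have hD : ∀ s t' : ℝ, 0 ≤ s → s ≤ t' → t' ≤ T →
        ‖(J t' - I t') - (J s - I s)‖ ≤ 2 * (K * C * M) * (t' - s) ^ θ := by
      intro s t' hs hst ht'
      have h1 := hJb s t' hs hst ht'
      have h2 := hbound s t' hs hst ht'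
      have h3 : (J t' - I t') - (J s - I s)
          = (J t' - J s - A s t') - (I t' - I s - A s t') := by abel
      rw [h3]
      calc ‖(J t' - J s - A s t') - (I t' - I s - A s t')‖
          ≤ ‖J t' - J s - A s t'‖ + ‖I t' - I s - A s t'‖ := norm_sub_le _ _
        _ ≤ 2 * (K * C * M) * (t' - s) ^ θ := by rw [← hγη]; linarith
    rcases eq_or_lt_of_le ht0 with h | h
    · rw [← h, hJ0, hI0]
    have hθ1 : (0:ℝ) < θ - 1 := by linarith
    have hDt : ∀ n : ℕ, n ≠ 0 → ‖J t - I t‖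
        ≤ (2 * (K * C * M) * t ^ θ) * (n:ℝ) ^ ((1:ℝ) - θ) := by
      intro n hn
      have hn0 : (0:ℝ) < (n:ℝ) := by exact_mod_cast Nat.pos_of_ne_zero hn
      have htel : J t - I t = ∑ j ∈ Finset.range n,
          ((J (Sew.pt 0 t n (j+1)) - I (Sew.pt 0 t n (j+1)))
            - (J (Sew.pt 0 t n j) - I (Sew.pt 0 t n j))) := by
        rw [Finset.sum_range_sub (fun j => J (Sew.pt 0 t n j) - I (Sew.pt 0 t n j)),
          Sew.pt_last 0 t hn, Sew.pt_zero, hJ0, hI0]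
        abel
      rw [htel]
      calc ‖∑ j ∈ Finset.range n,
            ((J (Sew.pt 0 t n (j+1)) - I (Sew.pt 0 t n (j+1)))
              - (J (Sew.pt 0 t n j) - I (Sew.pt 0 t n j)))‖
          ≤ ∑ j ∈ Finset.range n,
            ‖(J (Sew.pt 0 t n (j+1)) - I (Sew.pt 0 t n (j+1)))
              - (J (Sew.pt 0 t n j) - I (Sew.pt 0 t n j))‖ := norm_sum_le _ _
        _ ≤ ∑ _j ∈ Finset.range n, 2 * (K * C * M) * (t/n) ^ θ := by
            apply Finset.sum_le_sum
            intro j hj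
            have hj' : j + 1 ≤ n := Finset.mem_range.mp hj
            have hp1 : 0 ≤ Sew.pt 0 t n j := Sew.le_pt ht0 n j
            have hp2 : Sew.pt 0 t n j ≤ Sew.pt 0 t n (j+1) := Sew.pt_mono ht0 n (by omega)
            have hp3 : Sew.pt 0 t n (j+1) ≤ T := le_trans (Sew.pt_le ht0 hj' hn) htT
            have hsub := Sew.pt_succ_sub 0 t hn j
            have := hD (Sew.pt 0 t n j) (Sew.pt 0 t n (j+1)) hp1 hp2 hp3
            rwa [hsub, sub_zero] at this
        _ = n * (2 * (K * C * M) * (t/n) ^ θ) := by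
            rw [Finset.sum_const, Finset.card_range, nsmul_eq_mul]
        _ = (2 * (K * C * M) * t ^ θ) * (n:ℝ) ^ ((1:ℝ) - θ) := by
            rw [Real.div_rpow ht0 hn0.le, Real.rpow_sub hn0, Real.rpow_one]
            field_simp
    have hlim : Tendsto (fun n : ℕ => (2 * (K * C * M) * t ^ θ) * (n:ℝ) ^ ((1:ℝ) - θ))
        atTop (𝓝 0) := by
      have h6 : Tendsto (fun x : ℝ => x ^ ((1:ℝ) - θ)) atTop (𝓝 0) := by
        have h7 := tendsto_rpow_neg_atTop hθ1
        simpa [neg_sub] using h7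
      have h8 := (h6.comp tendsto_natCast_atTop_atTop).const_mul (2 * (K * C * M) * t ^ θ)
      simpa using h8
    have h9 : ‖J t - I t‖ ≤ 0 :=
      ge_of_tendsto hlim (Filter.eventually_atTop.mpr ⟨1, fun n hn => hDt n (by omega)⟩)
    have h10 : J t - I t = 0 := norm_le_zero_iff.mp h9
    exact sub_eq_zero.mp h10
end
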